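/- Let q ≥ 1 and Δ ≥ 3 be integers, set d = Δ−1, and let B be a real parameter with 0 ≤ B < 1. Let (R₁,…,R_q, C₁,…,C_q, λ, μ) be a positive solution of the Potts tree recursions. Then the set of values {R₁,…,R_q} has at most 3 elements, the set of values {C₁,…,C_q} has at most 3 elements, and these two sets have the same cardinality; moreover R_i = R_j if and only if C_i = C_j. -/

import Mathlib

private lemma potts_sum_lt {d : ℕ} (hd : 1 ≤ d) {x y z : ℝ}
    (hx : 0 < x) (hxy : x < y) (hyz : y < z) :
    (∑ i ∈ Finset.range (d + 1), y ^ i * x ^ (d - i)) <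
      (∑ i ∈ Finset.range (d + 1), z ^ i * y ^ (d - i)) := by
  apply Finset.sum_lt_sum
  · intro i _
    have hz : (0:ℝ) ≤ z := by linarith
    exact mul_le_mul (pow_le_pow_left₀ (by linarith) hyz.le i)
      (pow_le_pow_left₀ hx.le hxy.le _) (pow_nonneg hx.le _) (pow_nonneg hz _)
  · refine ⟨0, Finset.mem_range.mpr (by omega), ?_⟩
    simpa using pow_lt_pow_left₀ hxy hx.le (by omega : d ≠ 0)

private lemma potts_SR_eq {d : ℕ} (a SR : ℝ) {x y : ℝ} (hxy : x < y)
    (h : x * (SR - a * x ^ d) = y * (SR - a * y ^ d)) :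
    SR = a * ∑ i ∈ Finset.range (d + 1), y ^ i * x ^ (d - i) := by
  have hg := geom_sum₂_mul (R := ℝ) y x (d + 1)
  simp only [Nat.add_sub_cancel] at hg
  have hne : y - x ≠ 0 := sub_ne_zero.mpr hxy.ne'
  have h1 : SR * (y - x) = a * (y * y ^ d - x * x ^ d) := by linear_combination -h
  rw [← pow_succ', ← pow_succ'] at h1
  apply mul_right_cancel₀ hne
  rw [h1, ← hg]
  ring

private lemma potts_no_four {d : ℕ} (hd : 2 ≤ d) {a c SR SC : ℝ} (ha : 0 < a) (hc : 0 < c)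
    {x0 x1 x2 x3 : ℝ}
    (h01 : x0 < x1) (h12 : x1 < x2) (h23 : x2 < x3)
    (hp0 : 0 < x0) (hp3 : a * x3 ^ d < SR)
    (hf0 : x0 = SC - c * (SR - a * x0 ^ d) ^ d)
    (hf1 : x1 = SC - c * (SR - a * x1 ^ d) ^ d)
    (hf2 : x2 = SC - c * (SR - a * x2 ^ d) ^ d)
    (hf3 : x3 = SC - c * (SR - a * x3 ^ d) ^ d) : False := by
  have hdR : (0 : ℝ) < (d : ℝ) := by positivity
  set H : ℝ → ℝ := fun x => x - SC + c * (SR - a * x ^ d) ^ d with hH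
  set H' : ℝ → ℝ :=
    fun y => 1 + c * ((d : ℝ) * (SR - a * y ^ d) ^ (d - 1) * (-(a * ((d : ℝ) * y ^ (d - 1))))) with hH'
  have hderiv : ∀ y : ℝ, HasDerivAt H (H' y) y := by
    intro y
    have h1 : HasDerivAt (fun x : ℝ => SR - a * x ^ d) (-(a * ((d : ℝ) * y ^ (d - 1)))) y :=
      ((hasDerivAt_pow d y).const_mul a).const_sub SR
    have h2 := (h1.pow d).const_mul c
    have h3 := ((hasDerivAt_id y).sub_const SC).add h2
    convert h3 using 1
    all_goals rfl
  have hcont : Continuous H := by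
    simp only [hH]
    fun_prop
  have hH0 : H x0 = 0 := by simp only [hH]; linarith
  have hH1 : H x1 = 0 := by simp only [hH]; linarith
  have hH2 : H x2 = 0 := by simp only [hH]; linarith
  have hH3 : H x3 = 0 := by simp only [hH]; linarith
  have hacd : a * c * (d : ℝ) ^ 2 ≠ 0 := by positivity
  have rolle : ∀ p r : ℝ, p < r → H p = 0 → H r = 0 →
      ∃ ξ ∈ Set.Ioo p r, (ξ * (SR - a * ξ ^ d)) ^ (d - 1) = 1 / (a * c * (d : ℝ) ^ 2) := by
    intro p r hpr hp hr
    obtain ⟨ξ, hξmem, hξ⟩ := exists_hasDerivAt_eq_zero hpr hcont.continuousOn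
      (hp.trans hr.symm) (fun x _ => hderiv x)
    refine ⟨ξ, hξmem, ?_⟩
    simp only [hH'] at hξ
    rw [eq_div_iff hacd, mul_pow]
    linear_combination -hξ
  obtain ⟨ξ1, hm1, he1⟩ := rolle x0 x1 h01 hH0 hH1
  obtain ⟨ξ2, hm2, he2⟩ := rolle x1 x2 h12 hH1 hH2
  obtain ⟨ξ3, hm3, he3⟩ := rolle x2 x3 h23 hH2 hH3
  -- positivity of ψ at each ξ
  have hψpos : ∀ ξ : ℝ, x0 < ξ → ξ < x3 → 0 < ξ * (SR - a * ξ ^ d) := by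
    intro ξ h0 h3
    have hξpos : 0 < ξ := hp0.trans h0
    have : ξ ^ d < x3 ^ d := pow_lt_pow_left₀ h3 hξpos.le (by omega)
    have : a * ξ ^ d < SR := by nlinarith
    exact mul_pos hξpos (by linarith)
  have hψ1 : 0 < ξ1 * (SR - a * ξ1 ^ d) := hψpos ξ1 hm1.1 (by linarith [hm1.2, h12, h23])
  have hψ2 : 0 < ξ2 * (SR - a * ξ2 ^ d) := hψpos ξ2 (by linarith [hm2.1, h01]) (by linarith [hm2.2, h23])
  have hψ3 : 0 < ξ3 * (SR - a * ξ3 ^ d) := hψpos ξ3 (by linarith [hm3.1, h01, h12]) hm3.2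
  have hd1 : d - 1 ≠ 0 := by omega
  have hψeq : ∀ s t : ℝ, 0 < s → 0 < t → s ^ (d - 1) = t ^ (d - 1) → s = t := by
    intro s t hs ht hst
    rcases lt_trichotomy s t with h | h | h
    · exact absurd hst (ne_of_lt (pow_lt_pow_left₀ h hs.le hd1))
    · exact h
    · exact absurd hst.symm (ne_of_lt (pow_lt_pow_left₀ h ht.le hd1))
  have h12' : ξ1 * (SR - a * ξ1 ^ d) = ξ2 * (SR - a * ξ2 ^ d) :=
    hψeq _ _ hψ1 hψ2 (he1.trans he2.symm)
  have h23' : ξ2 * (SR - a * ξ2 ^ d) = ξ3 * (SR - a * ξ3 ^ d) :=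
    hψeq _ _ hψ2 hψ3 (he2.trans he3.symm)
  have hlt12 : ξ1 < ξ2 := lt_trans hm1.2 hm2.1
  have hlt23 : ξ2 < ξ3 := lt_trans hm2.2 hm3.1
  have hA := potts_SR_eq a SR hlt12 h12'
  have hB := potts_SR_eq a SR hlt23 h23'
  have hξ1pos : 0 < ξ1 := hp0.trans hm1.1
  have hsum := potts_sum_lt (by omega : 1 ≤ d) hξ1pos hlt12 hlt23
  nlinarith [hsum]

private lemma potts_exists_four (S : Set ℝ) (hfin : S.Finite) (h : 4 ≤ S.ncard) :
    ∃ x0 x1 x2 x3 : ℝ, x0 ∈ S ∧ x1 ∈ S ∧ x2 ∈ S ∧ x3 ∈ S ∧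
      x0 < x1 ∧ x1 < x2 ∧ x2 < x3 := by
  classical
  rw [Set.ncard_eq_toFinset_card S hfin] at h
  obtain ⟨t, hts, ht4⟩ := Finset.exists_subset_card_eq h
  let e := t.orderIsoOfFin ht4
  have hmem : ∀ k : Fin 4, ((e k : ℝ)) ∈ S := by
    intro k
    have := (e k).2
    exact hfin.mem_toFinset.mp (hts this)
  have hlt : ∀ k l : Fin 4, k < l → ((e k : ℝ)) < ((e l : ℝ)) := by
    intro k l hkl
    exact_mod_cast e.strictMono hkl
  exact ⟨e 0, e 1, e 2, e 3, hmem 0, hmem 1, hmem 2, hmem 3,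
    hlt 0 1 (by decide), hlt 1 2 (by decide), hlt 2 3 (by decide)⟩

/-- a positive solution of the antiferromagnetic Potts tree recursions
takes at most 3 distinct values among the R_i, at most 3 among the C_j, these two
value sets have the same cardinality, and R_i = R_j iff C_i = C_j. -/
theorem potts_fixpoint_at_most_three_values
    (q Δ : ℕ) (hq : 1 ≤ q) (hΔ : 3 ≤ Δ)
    (B : ℝ) (hB0 : 0 ≤ B) (hB1 : B < 1)
    (R C : Fin q → ℝ) (lam mu : ℝ)
    (hR : ∀ i, 0 < R i) (hC : ∀ j, 0 < C j)
    (hlam : 0 < lam) (hmu : 0 < mu)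
    (hrecR : ∀ i, R i = lam * (B * C i + ((∑ j, C j) - C i)) ^ (Δ - 1))
    (hrecC : ∀ j, C j = mu * (B * R j + ((∑ i, R i) - R j)) ^ (Δ - 1)) :
    (Set.range R).ncard ≤ 3 ∧ (Set.range C).ncard ≤ 3 ∧
    (Set.range R).ncard = (Set.range C).ncard ∧
    (∀ i j, R i = R j ↔ C i = C j) := by
  set d := Δ - 1 with hdd
  have hd : 2 ≤ d := by omega
  set SC := ∑ j, C j with hSC
  set SR := ∑ i, R i with hSR
  set u : Fin q → ℝ := fun i => B * C i + (SC - C i) with hu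
  set v : Fin q → ℝ := fun i => B * R i + (SR - R i) with hv
  have hrecRu : ∀ i, R i = lam * u i ^ d := by intro i; simp only [hu]; exact hrecR i
  have hrecCu : ∀ i, C i = mu * v i ^ d := by intro i; simp only [hv]; exact hrecC i
  have key : ∀ i j, R i = R j ↔ C i = C j := by
    intro i j
    constructor
    · intro h; rw [hrecC i, hrecC j, h]
    · intro h; rw [hrecR i, hrecR j, h]
  have hCle : ∀ i, C i ≤ SC := fun i =>
    Finset.single_le_sum (fun j _ => (hC j).le) (Finset.mem_univ i)
  have hRle : ∀ i, R i ≤ SR := fun i =>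
    Finset.single_le_sum (fun j _ => (hR j).le) (Finset.mem_univ i)
  have hu_pos : ∀ i, 0 < u i := by
    intro i
    have h1 : 0 ≤ u i := by
      simp only [hu]
      have := hCle i
      have := mul_nonneg hB0 (hC i).le
      linarith
    rcases eq_or_lt_of_le h1 with h0 | h0
    · exfalso
      have hri := hrecRu i
      rw [← h0, zero_pow (by omega : d ≠ 0), mul_zero] at hri
      exact absurd hri (hR i).ne'
    · exact h0
  have hv_pos : ∀ i, 0 < v i := by
    intro i
    have h1 : 0 ≤ v i := by
      simp only [hv]
      have := hRle i
      have := mul_nonneg hB0 (hR i).le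
      linarith
    rcases eq_or_lt_of_le h1 with h0 | h0
    · exfalso
      have hci := hrecCu i
      rw [← h0, zero_pow (by omega : d ≠ 0), mul_zero] at hci
      exact absurd hci (hC i).ne'
    · exact h0
  set a := (1 - B) * lam with hA
  set c := (1 - B) * mu with hCc
  have ha : 0 < a := mul_pos (by linarith) hlam
  have hc : 0 < c := mul_pos (by linarith) hmu
  have hSRu : ∀ i, SR - a * u i ^ d = v i := by
    intro i
    have h1 : a * u i ^ d = (1 - B) * R i := by rw [hA, mul_assoc, ← hrecRu i]
    simp only [hv]
    linear_combination -h1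
  have hfix : ∀ i, u i = SC - c * (SR - a * u i ^ d) ^ d := by
    intro i
    rw [hSRu i]
    have h2 : c * v i ^ d = (1 - B) * C i := by rw [hCc, mul_assoc, ← hrecCu i]
    simp only [hu]
    linear_combination h2
  have hvlt : ∀ i, a * u i ^ d < SR := by
    intro i
    have := hSRu i
    have := hv_pos i
    linarith
  -- at most 3 values among the u i
  have hcard_u : (Set.range u).ncard ≤ 3 := by
    by_contra hlt
    push_neg at hlt
    obtain ⟨x0, x1, x2, x3, m0, m1, m2, m3, l01, l12, l23⟩ :=
      potts_exists_four (Set.range u) (Set.finite_range u) (by omega)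
    obtain ⟨i0, rfl⟩ := m0
    obtain ⟨i1, rfl⟩ := m1
    obtain ⟨i2, rfl⟩ := m2
    obtain ⟨i3, rfl⟩ := m3
    exact potts_no_four hd ha hc l01 l12 l23 (hu_pos i0) (hvlt i3)
      (hfix i0) (hfix i1) (hfix i2) (hfix i3)
  -- range R is an injective image of range u
  have hRcomp : R = (fun x => lam * x ^ d) ∘ u := funext hrecRu
  have hinj1 : Set.InjOn (fun x : ℝ => lam * x ^ d) (Set.range u) := by
    rintro x ⟨i, rfl⟩ y ⟨j, rfl⟩ hxy
    simp only at hxy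
    have hRij : R i = R j := by rw [hrecRu i, hrecRu j]; exact hxy
    have hCij := (key i j).mp hRij
    simp only [hu, hCij]
  have e1 : (Set.range R).ncard = (Set.range u).ncard := by
    rw [hRcomp, Set.range_comp]
    exact Set.ncard_image_of_injOn hinj1
  -- range R is an injective image of range C
  have hRcomp2 : R = (fun x => lam * (B * x + (SC - x)) ^ d) ∘ C := funext hrecR
  have hinj2 : Set.InjOn (fun x : ℝ => lam * (B * x + (SC - x)) ^ d) (Set.range C) := by
    rintro x ⟨i, rfl⟩ y ⟨j, rfl⟩ hxy
    simp only at hxy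
    have hRij : R i = R j := by rw [hrecR i, hrecR j]; exact hxy
    exact (key i j).mp hRij
  have e2 : (Set.range R).ncard = (Set.range C).ncard := by
    rw [hRcomp2, Set.range_comp]
    exact Set.ncard_image_of_injOn hinj2
  refine ⟨?_, ?_, e2, key⟩
  · rw [e1]; exact hcard_u
  · rw [← e2, e1]; exact hcard_u
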